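/- arXiv:2604.25145 — 2 statements merged into one kernel-verified Lean document; each statement's English description precedes it below -/
import Mathlib

section
/- E-step for V: under the same complete-data model, the conditional distribution of V given x is Binomial(k−1, p) with p = π F_1 / (π F_1 + (1−π) F_2), independent of Z; in particular E[V | x] = (k−1) π F_1 / (π F_1 + (1−π) F_2). -/
lemma binom_sum (a b : ℝ) (n : ℕ) :
    ∑ v ∈ Finset.range (n+1), (n.choose v : ℝ) * a ^ v * b ^ (n - v) = (a + b) ^ n := by
  rw [add_pow]
  exact Finset.sum_congr rfl fun v _ => by ring

lemma binom_mean (a b : ℝ) (n : ℕ) :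
    ∑ v ∈ Finset.range (n+1), (v : ℝ) * ((n.choose v : ℝ) * a ^ v * b ^ (n - v))
      = n * a * (a + b) ^ (n - 1) := by
  cases n with
  | zero => simp
  | succ m =>
    rw [Finset.sum_range_succ']
    simp only [Nat.cast_zero, zero_mul, add_zero]
    rw [show (m + 1 : ℕ) - 1 = m from rfl, ← binom_sum a b m, Finset.mul_sum]
    refine Finset.sum_congr rfl fun v hv => ?_
    have h := Nat.add_one_mul_choose_eq m v
    have hc : ((m+1 : ℕ) : ℝ) * (m.choose v : ℝ)
        = ((m+1).choose (v+1) : ℝ) * ((v+1 : ℕ) : ℝ) := by exact_mod_cast congrArg Nat.cast h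
    have hsub : m + 1 - (v + 1) = m - v := by omega
    rw [hsub]
    push_cast at hc ⊢
    linear_combination (-(a ^ (v+1) * b ^ (m - v))) * hc

/-- E-step for `V`: the posterior distribution of `V` is `Binomial(k−1, p)` with
`p = π F₁ / (π F₁ + (1−π) F₂)`, and in particular `E[V | x] = (k−1) p`. -/
theorem estep_V
    (π : ℝ) (hπ : π ∈ Set.Ioo (0 : ℝ) 1) (k : ℕ) (hk : 1 ≤ k)
    (f₁ f₂ F₁ F₂ : ℝ) (hf₁ : 0 ≤ f₁) (hf₂ : 0 ≤ f₂) (hF₁ : 0 ≤ F₁) (hF₂ : 0 ≤ F₂)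
    (hf : 0 < π * f₁ + (1 - π) * f₂) (hF : 0 < π * F₁ + (1 - π) * F₂)
    (w : ℕ → ℕ → ℝ)
    (hw : ∀ z v, w z v =
      ((k - 1).choose v : ℝ) * π ^ (z + v) * (1 - π) ^ (k - z - v)
        * f₁ ^ z * f₂ ^ (1 - z) * F₁ ^ v * F₂ ^ (k - 1 - v))
    (p : ℝ) (hp : p = π * F₁ / (π * F₁ + (1 - π) * F₂)) :
    (∀ v ∈ Finset.range k,
        (∑ z ∈ Finset.range 2, w z v)
            / (∑ z ∈ Finset.range 2, ∑ v' ∈ Finset.range k, w z v')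
          = ((k - 1).choose v : ℝ) * p ^ v * (1 - p) ^ (k - 1 - v))
    ∧ (∑ z ∈ Finset.range 2, ∑ v ∈ Finset.range k, (v : ℝ) * w z v)
          / (∑ z ∈ Finset.range 2, ∑ v ∈ Finset.range k, w z v)
        = ((k : ℝ) - 1) * p := by
  obtain ⟨n, rfl⟩ : ∃ n, k = n + 1 := ⟨k - 1, by omega⟩
  set a := π * F₁ with ha
  set b := (1 - π) * F₂ with hb
  set Df := π * f₁ + (1 - π) * f₂ with hDf
  have hab : a + b = π * F₁ + (1 - π) * F₂ := rfl
  have hS : 0 < a + b := by rw [hab]; exact hF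
  -- sum over z for fixed v
  have hsum : ∀ v ∈ Finset.range (n + 1),
      (∑ z ∈ Finset.range 2, w z v)
        = Df * ((n.choose v : ℝ) * a ^ v * b ^ (n - v)) := by
    intro v hv
    have hv' : v ≤ n := by simpa using Nat.lt_succ_iff.mp (Finset.mem_range.mp hv)
    have h1 : n + 1 - 0 - v = (n - v) + 1 := by omega
    have h2 : n + 1 - 1 - v = n - v := by omega
    have h3 : (n + 1 - 1) = n := by omega
    rw [Finset.sum_range_succ, Finset.sum_range_succ, Finset.sum_range_zero, zero_add,
      hw 0 v, hw 1 v]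
    simp only [h1, h2, h3, pow_zero, pow_one, zero_add, pow_succ, ha, hb, hDf, mul_pow]
    ring
  -- denominator
  have hden : (∑ z ∈ Finset.range 2, ∑ v' ∈ Finset.range (n + 1), w z v')
      = Df * (a + b) ^ n := by
    rw [Finset.sum_comm]
    rw [Finset.sum_congr rfl hsum, ← Finset.mul_sum, binom_sum]
  have hDf0 : Df ≠ 0 := ne_of_gt hf
  have hS0 : (a + b) ≠ 0 := ne_of_gt hS
  have hp' : p = a / (a + b) := by rw [hp, ha, hb, hab]
  have h1p : 1 - p = b / (a + b) := by
    rw [hp']; field_simp; ring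
  constructor
  · intro v hv
    have hv' : v ≤ n := Nat.lt_succ_iff.mp (Finset.mem_range.mp hv)
    rw [hsum v hv, hden]
    simp only [Nat.add_sub_cancel]
    rw [h1p, hp', div_pow, div_pow]
    field_simp
    rw [mul_assoc, ← pow_add, show v + (n - v) = n by omega]
  · -- mean
    have hnum : (∑ z ∈ Finset.range 2, ∑ v ∈ Finset.range (n + 1), (v : ℝ) * w z v)
        = Df * ((n : ℝ) * a * (a + b) ^ (n - 1)) := by
      rw [Finset.sum_comm]
      have : ∀ v ∈ Finset.range (n + 1),
          (∑ z ∈ Finset.range 2, (v : ℝ) * w z v)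
            = Df * ((v : ℝ) * ((n.choose v : ℝ) * a ^ v * b ^ (n - v))) := by
        intro v hv
        rw [← Finset.mul_sum, hsum v hv]; ring
      rw [Finset.sum_congr rfl this, ← Finset.mul_sum, binom_mean]
    rw [hnum, hden, hp']
    have hcast : ((n : ℝ) + 1) - 1 = (n : ℝ) := by ring
    push_cast
    rw [hcast]
    cases n with
    | zero => simp
    | succ m =>
      rw [show (m + 1 : ℕ) - 1 = m from rfl, pow_succ]
      field_simp
end

section
/- Enrichment under NS with stochastic dominance: suppose the rare component cdf F_2 satisfies F_2(x) ≤ F_1(x) for all x (F_2 first-order stochastically dominates F_1), with strict inequality on a set of positive f-measure. Then for k ≥ 2 the probability that the observed maximum of a set of k i.i.d. mixture draws belongs to component 2 is strictly greater than 1−π, the prior probability. -/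
open MeasureTheory Set Filter Topology
open scoped ENNReal

variable {g : ℝ → ℝ}

lemma cdf_mono (hg0 : ∀ x, 0 ≤ g x) (hgi : Integrable g volume) :
    Monotone (fun x => ∫ t in Iic x, g t) := fun _ _ hab =>
  setIntegral_mono_set hgi.integrableOn (Eventually.of_forall fun x => hg0 x)
    ((Iic_subset_Iic.mpr hab).eventuallyLE)

lemma cdf_nonneg (hg0 : ∀ x, 0 ≤ g x) (x : ℝ) : 0 ≤ ∫ t in Iic x, g t :=
  setIntegral_nonneg measurableSet_Iic fun t _ => hg0 t

lemma cdf_le (hg0 : ∀ x, 0 ≤ g x) (hgi : Integrable g volume) (x : ℝ) :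
    (∫ t in Iic x, g t) ≤ ∫ t, g t :=
  setIntegral_le_integral hgi (Eventually.of_forall fun t => hg0 t)

lemma cdf_continuous (hgi : Integrable g volume) :
    Continuous (fun x => ∫ t in Iic x, g t) := by
  have h : ∀ x : ℝ, (∫ t in Iic x, g t) =
      (∫ t in Iic (0:ℝ), g t) + ∫ t in (0:ℝ)..x, g t := by
    intro x
    rw [← intervalIntegral.integral_Iic_sub_Iic hgi.integrableOn hgi.integrableOn]
    ring
  exact (continuous_const.add
    (intervalIntegral.continuous_primitive (fun a b => hgi.intervalIntegrable) 0)).congr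
    (fun x => (h x).symm)

lemma cdf_tendsto (hgi : Integrable g volume) :
    Tendsto (fun x => ∫ t in Iic x, g t) atTop (𝓝 (∫ t, g t)) :=
  (MeasureTheory.aecover_Iic tendsto_id).integral_tendsto_of_countably_generated hgi

lemma core (hg0 : ∀ x, 0 ≤ g x) (hgm : Measurable g) (hgi : Integrable g volume)
    (hg1 : ∫ x, g x = 1) (n : ℕ) (hn : n ≠ 0) :
    1/(n+1:ℝ) ≤ ∫ x, g x * (∫ t in Iic x, g t) ^ n := by
  have hn' : (0:ℝ) < n := by positivity
  set G : ℝ → ℝ := fun x => ∫ t in Iic x, g t with hGdef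
  have hGc : Continuous G := cdf_continuous hgi
  have hGm : Measurable G := hGc.measurable
  have hG0 : ∀ x, 0 ≤ G x := cdf_nonneg hg0
  have hG1 : ∀ x, G x ≤ 1 := fun x => by simpa [hg1] using cdf_le hg0 hgi x
  set μ := volume.withDensity (fun x => ENNReal.ofReal (g x)) with hμdef
  have hμs : ∀ (s : Set ℝ), MeasurableSet s → μ s = ENNReal.ofReal (∫ t in s, g t) := by
    intro s hs
    rw [hμdef, withDensity_apply _ hs]
    exact (ofReal_integral_eq_lintegral_ofReal hgi.integrableOn
      (ae_of_all _ fun t => hg0 t)).symm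
  have hμuniv : μ univ = 1 := by
    rw [hμs univ MeasurableSet.univ, Measure.restrict_univ, hg1, ENNReal.ofReal_one]
  have hμIic : ∀ x, μ (Iic x) = ENNReal.ofReal (G x) := fun x => hμs _ measurableSet_Iic
  -- μ {G < s} ≤ ofReal s
  have key : ∀ s : ℝ, μ {x | G x < s} ≤ ENNReal.ofReal s := by
    intro s
    rcases le_or_gt s 0 with hs | hs
    · have : {x | G x < s} = ∅ :=
        eq_empty_of_forall_notMem fun x hx => absurd (lt_of_le_of_lt (hG0 x) hx)
          (not_lt.mpr hs)
      simp [this]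
    rcases le_or_gt 1 s with hs1 | hs1
    · calc μ {x | G x < s} ≤ μ univ := measure_mono (subset_univ _)
        _ = 1 := hμuniv
        _ ≤ ENNReal.ofReal s := by
            rw [← ENNReal.ofReal_one]; exact ENNReal.ofReal_le_ofReal hs1
    · rcases eq_empty_or_nonempty {x | G x < s} with hW | hW
      · simp [hW]
      · have hGt : ∀ᶠ x in atTop, s < G x := by
          have h1 := cdf_tendsto hgi
          rw [hg1] at h1
          exact h1.eventually_const_lt hs1
        obtain ⟨x₀, hx₀⟩ := hGt.exists
        have hbdd : BddAbove {x | G x < s} := ⟨x₀, fun w hw => by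
          by_contra hlt
          push_neg at hlt
          exact absurd (cdf_mono hg0 hgi hlt.le) (not_le.mpr (lt_trans hw hx₀))⟩
        have hq : G (sSup {x | G x < s}) ≤ s := by
          have hqW : sSup {x | G x < s} ∈ closure {x | G x < s} := csSup_mem_closure hW hbdd
          have hcl : closure {x | G x < s} ⊆ {x | G x ≤ s} :=
            (isClosed_le hGc continuous_const).closure_subset_iff.mpr (fun x (hx : G x < s) => hx.le)
          exact hcl hqW
        calc μ {x | G x < s} ≤ μ (Iic (sSup {x | G x < s})) :=
              measure_mono (fun w hw => le_csSup hbdd hw)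
          _ = ENNReal.ofReal (G (sSup {x | G x < s})) := hμIic _
          _ ≤ ENNReal.ofReal s := ENNReal.ofReal_le_ofReal hq
  -- lower bound on upper level sets
  have key2 : ∀ t ∈ Ioc (0:ℝ) 1,
      1 - ENNReal.ofReal (t ^ ((n:ℝ)⁻¹)) ≤ μ {x | t ≤ G x ^ n} := by
    intro t ht
    have hsub : {x | G x ^ n < t} ⊆ {x | G x < t ^ ((n:ℝ)⁻¹)} := by
      intro x hx
      by_contra h
      simp only [mem_setOf_eq, not_lt] at h
      have h2 : (t ^ ((n:ℝ)⁻¹)) ^ n ≤ G x ^ n :=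
        pow_le_pow_left₀ (Real.rpow_nonneg ht.1.le _) h n
      rw [Real.rpow_inv_natCast_pow ht.1.le hn] at h2
      exact absurd hx (not_lt.mpr h2)
    have hcompl : (1:ℝ≥0∞) ≤ μ {x | t ≤ G x ^ n} + μ {x | G x ^ n < t} := by
      rw [← hμuniv]
      refine le_trans (measure_mono ?_) (measure_union_le _ _)
      intro x _
      rcases le_or_gt t (G x ^ n) with h | h
      · exact Or.inl h
      · exact Or.inr h
    have h3 : μ {x | G x ^ n < t} ≤ ENNReal.ofReal (t ^ ((n:ℝ)⁻¹)) :=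
      (measure_mono hsub).trans (key _)
    calc 1 - ENNReal.ofReal (t ^ ((n:ℝ)⁻¹)) ≤ 1 - μ {x | G x ^ n < t} :=
          tsub_le_tsub_left h3 1
      _ ≤ μ {x | t ≤ G x ^ n} := by
          rw [tsub_le_iff_right]
          exact hcompl
  -- the rpow integral
  have hrint : IntegrableOn (fun t : ℝ => t ^ ((n:ℝ)⁻¹)) (Ioc 0 1) volume := by
    rw [← intervalIntegrable_iff_integrableOn_Ioc_of_le zero_le_one]
    exact intervalIntegral.intervalIntegrable_rpow' (show (-1:ℝ) < (n:ℝ)⁻¹ from lt_of_lt_of_le (show (-1:ℝ) < 0 by norm_num) (by positivity))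
  have hrval : ∫ t in Ioc (0:ℝ) 1, t ^ ((n:ℝ)⁻¹) = (n:ℝ)/(n+1) := by
    rw [← intervalIntegral.integral_of_le zero_le_one,
      integral_rpow (Or.inl (show (-1:ℝ) < (n:ℝ)⁻¹ from lt_of_lt_of_le (show (-1:ℝ) < 0 by norm_num) (by positivity))),
      Real.one_rpow, Real.zero_rpow (ne_of_gt (by positivity))]
    rw [sub_zero]
    rw [div_eq_div_iff (by positivity) (by positivity)]
    field_simp
    ring
  have hrlint : ∫⁻ t in Ioc (0:ℝ) 1, ENNReal.ofReal (t ^ ((n:ℝ)⁻¹))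
      = ENNReal.ofReal ((n:ℝ)/(n+1)) := by
    rw [← ofReal_integral_eq_lintegral_ofReal hrint
      ((ae_restrict_iff' measurableSet_Ioc).mpr
        (ae_of_all _ fun t ht => Real.rpow_nonneg ht.1.le _)), hrval]
  -- the lintegral lower bound
  have hmain : ENNReal.ofReal (1/(n+1:ℝ)) ≤ ∫⁻ t in Ioi (0:ℝ), μ {a | t ≤ G a ^ n} := by
    have h1 : ∫⁻ t in Ioc (0:ℝ) 1, (1 - ENNReal.ofReal (t ^ ((n:ℝ)⁻¹)))
        ≤ ∫⁻ t in Ioi (0:ℝ), μ {a | t ≤ G a ^ n} := by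
      refine le_trans (lintegral_mono_ae ((ae_restrict_iff' measurableSet_Ioc).mpr
        (ae_of_all _ fun t ht => key2 t ht))) (lintegral_mono_set Ioc_subset_Ioi_self)
    refine le_trans (le_of_eq ?_) h1
    have hmeas : Measurable (fun t : ℝ => ENNReal.ofReal (t ^ ((n:ℝ)⁻¹))) :=
      (measurable_id.pow_const _).ennreal_ofReal
    rw [lintegral_sub hmeas (by rw [hrlint]; exact ENNReal.ofReal_ne_top)
      ((ae_restrict_iff' measurableSet_Ioc).mpr (ae_of_all _ fun t ht => by
        have : t ^ ((n:ℝ)⁻¹) ≤ 1 := Real.rpow_le_one ht.1.le ht.2 (by positivity)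
        calc ENNReal.ofReal (t ^ ((n:ℝ)⁻¹)) ≤ ENNReal.ofReal 1 :=
              ENNReal.ofReal_le_ofReal this
          _ = 1 := ENNReal.ofReal_one
          _ = (fun _ => (1:ℝ≥0∞)) t := rfl)),
      hrlint, lintegral_one, Measure.restrict_apply_univ, Real.volume_Ioc]
    rw [sub_zero, ← ENNReal.ofReal_sub _ (by positivity)]
    congr 1
    field_simp
    ring
  -- rewrite the lintegral via withDensity and layer cake
  have hlap : ∫⁻ x, ENNReal.ofReal (G x ^ n) ∂μ
      = ∫⁻ t in Ioi (0:ℝ), μ {a | t ≤ G a ^ n} :=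
    lintegral_eq_lintegral_meas_le μ (ae_of_all _ fun x => pow_nonneg (hG0 x) n)
      ((hGm.pow_const n).aemeasurable)
  have hch : ∫⁻ x, ENNReal.ofReal (g x * G x ^ n)
      = ∫⁻ x, ENNReal.ofReal (G x ^ n) ∂μ := by
    rw [hμdef, lintegral_withDensity_eq_lintegral_mul _ hgm.ennreal_ofReal
      (hGm.pow_const n).ennreal_ofReal]
    refine lintegral_congr fun x => ?_
    simp [ENNReal.ofReal_mul (hg0 x)]
  have hfin : ∫⁻ x, ENNReal.ofReal (g x * G x ^ n) ≤ 1 := by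
    calc ∫⁻ x, ENNReal.ofReal (g x * G x ^ n) ≤ ∫⁻ x, ENNReal.ofReal (g x) := by
          refine lintegral_mono fun x => ENNReal.ofReal_le_ofReal ?_
          exact mul_le_of_le_one_right (hg0 x) (pow_le_one₀ (hG0 x) (hG1 x))
      _ = 1 := by
          rw [← ofReal_integral_eq_lintegral_ofReal hgi (ae_of_all _ hg0), hg1,
            ENNReal.ofReal_one]
  have hre : ∫ x, g x * G x ^ n = (∫⁻ x, ENNReal.ofReal (g x * G x ^ n)).toReal :=
    integral_eq_lintegral_of_nonneg_ae
      (ae_of_all _ fun x => mul_nonneg (hg0 x) (pow_nonneg (hG0 x) n))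
      ((hgm.mul (hGm.pow_const n)).aestronglyMeasurable)
  have hfinal : ENNReal.ofReal (1/(n+1:ℝ)) ≤ ∫⁻ x, ENNReal.ofReal (g x * G x ^ n) := by
    rw [hch, hlap]
    exact hmain
  calc 1/(n+1:ℝ) = (ENNReal.ofReal (1/(n+1:ℝ))).toReal :=
        (ENNReal.toReal_ofReal (by positivity)).symm
    _ ≤ (∫⁻ x, ENNReal.ofReal (g x * G x ^ n)).toReal :=
        ENNReal.toReal_mono (ne_top_of_le_ne_top ENNReal.one_ne_top hfin) hfinal
    _ = ∫ x, g x * G x ^ n := hre.symm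

/-- Enrichment under NS with first-order stochastic dominance: if `F₂ ≤ F₁` pointwise,
with strict inequality on a set of positive mixture-density measure, then for `k ≥ 2`
the probability that the observed maximum of a set of `k` i.i.d. mixture draws comes
from component 2, namely `k (1−π) ∫ f₂ F^{k−1}` with `F = π F₁ + (1−π) F₂`, strictly
exceeds the prior probability `1−π`. -/
theorem ns_enrichment_of_dominated_component
    (π : ℝ) (hπ : π ∈ Set.Ioo (0 : ℝ) 1)
    (f₁ f₂ : ℝ → ℝ)
    (hf₁ : ∀ x, 0 ≤ f₁ x) (hf₂ : ∀ x, 0 ≤ f₂ x)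
    (hm₁ : Measurable f₁) (hm₂ : Measurable f₂)
    (hi₁ : Integrable f₁ volume) (hi₂ : Integrable f₂ volume)
    (hint₁ : ∫ x, f₁ x = 1) (hint₂ : ∫ x, f₂ x = 1)
    (F₁ F₂ : ℝ → ℝ)
    (hF₁ : ∀ x, F₁ x = ∫ t in Set.Iic x, f₁ t)
    (hF₂ : ∀ x, F₂ x = ∫ t in Set.Iic x, f₂ t)
    (hdom : ∀ x, F₂ x ≤ F₁ x)
    (hstrict : 0 < (volume.withDensity
        (fun x => ENNReal.ofReal (π * f₁ x + (1 - π) * f₂ x)))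
        {x | F₂ x < F₁ x})
    (k : ℕ) (hk : 2 ≤ k) :
    1 - π < (k : ℝ) * (1 - π)
        * ∫ x, f₂ x * (π * F₁ x + (1 - π) * F₂ x) ^ (k - 1) := by
  obtain ⟨hπ0, hπ1⟩ := hπ
  have h1π : 0 < 1 - π := by linarith
  obtain ⟨n, rfl⟩ : ∃ n, k = n + 1 := ⟨k - 1, (Nat.succ_pred_eq_of_pos (by omega)).symm⟩
  have hn : n ≠ 0 := by omega
  simp only [Nat.add_sub_cancel]
  set Fm : ℝ → ℝ := fun x => π * F₁ x + (1 - π) * F₂ x with hFmdef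
  set f : ℝ → ℝ := fun x => π * f₁ x + (1 - π) * f₂ x with hfdef
  have hf0 : ∀ x, 0 ≤ f x := fun x =>
    add_nonneg (mul_nonneg hπ0.le (hf₁ x)) (mul_nonneg h1π.le (hf₂ x))
  have hfi : Integrable f volume := (hi₁.const_mul π).add (hi₂.const_mul (1 - π))
  have hfint : ∫ x, f x = 1 := by
    rw [hfdef]
    rw [integral_add (hi₁.const_mul π) (hi₂.const_mul (1 - π)),
      integral_const_mul, integral_const_mul, hint₁, hint₂]
    ring
  have hF1eq : F₁ = fun x => ∫ t in Set.Iic x, f₁ t := funext hF₁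
  have hF2eq : F₂ = fun x => ∫ t in Set.Iic x, f₂ t := funext hF₂
  have hF₁c : Continuous F₁ := by rw [hF1eq]; exact cdf_continuous hi₁
  have hF₂c : Continuous F₂ := by rw [hF2eq]; exact cdf_continuous hi₂
  have hFmc : Continuous Fm := (continuous_const.mul hF₁c).add (continuous_const.mul hF₂c)
  have hF₂0 : ∀ x, 0 ≤ F₂ x := fun x => by rw [hF₂ x]; exact cdf_nonneg hf₂ x
  have hFmix : ∀ x, Fm x = ∫ t in Set.Iic x, f t := by
    intro x
    rw [hFmdef]
    simp only [hF₁ x, hF₂ x, hfdef]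
    rw [integral_add (hi₁.integrableOn.const_mul π) (hi₂.integrableOn.const_mul (1 - π)),
      integral_const_mul, integral_const_mul]
  have hFm1 : ∀ x, Fm x ≤ 1 := fun x => by
    rw [hFmix x, ← hfint]; exact cdf_le hf0 hfi x
  have hFm0 : ∀ x, 0 ≤ Fm x := fun x => by rw [hFmix x]; exact cdf_nonneg hf0 x
  have hF₂Fm : ∀ x, F₂ x ≤ Fm x := fun x => by
    have := hdom x; simp only [hFmdef]; nlinarith
  -- integrability of the two integrands
  have hFmm : Measurable Fm := hFmc.measurable
  have hF₂m : Measurable F₂ := hF₂c.measurable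
  have hi_a : Integrable (fun x => f₂ x * Fm x ^ n) volume := by
    refine hi₂.mono ((hm₂.mul (hFmm.pow_const n)).aestronglyMeasurable)
      (Filter.Eventually.of_forall fun x => ?_)
    rw [Real.norm_eq_abs, Real.norm_eq_abs, abs_of_nonneg (hf₂ x),
      abs_of_nonneg (mul_nonneg (hf₂ x) (pow_nonneg (hFm0 x) n))]
    exact mul_le_of_le_one_right (hf₂ x) (pow_le_one₀ (hFm0 x) (hFm1 x))
  have hF₂1 : ∀ x, F₂ x ≤ 1 := fun x => (hF₂Fm x).trans (hFm1 x)
  have hi_b : Integrable (fun x => f₂ x * F₂ x ^ n) volume := by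
    refine hi₂.mono ((hm₂.mul (hF₂m.pow_const n)).aestronglyMeasurable)
      (Filter.Eventually.of_forall fun x => ?_)
    rw [Real.norm_eq_abs, Real.norm_eq_abs, abs_of_nonneg (hf₂ x),
      abs_of_nonneg (mul_nonneg (hf₂ x) (pow_nonneg (hF₂0 x) n))]
    exact mul_le_of_le_one_right (hf₂ x) (pow_le_one₀ (hF₂0 x) (hF₂1 x))
  have hi_c : Integrable (fun x => f₂ x * (Fm x ^ n - F₂ x ^ n)) volume := by
    have : (fun x => f₂ x * (Fm x ^ n - F₂ x ^ n))
        = fun x => f₂ x * Fm x ^ n - f₂ x * F₂ x ^ n := by funext x; ring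
    rw [this]; exact hi_a.sub hi_b
  -- the baseline bound from `core`
  have hB : 1/(n+1:ℝ) ≤ ∫ x, f₂ x * F₂ x ^ n := by
    have h := core hf₂ hm₂ hi₂ hint₂ n hn
    simp only [hF2eq]
    exact h
  -- nonemptiness of the strict-dominance set
  set U := {x | F₂ x < F₁ x} with hUdef
  have hUne : U.Nonempty := by
    rcases Set.eq_empty_or_nonempty U with h | h
    · exfalso; rw [h] at hstrict; simp at hstrict
    · exact h
  -- positivity of the witness set
  have hVpos : 0 < volume (U ∩ {x | 0 < f₂ x}) := by
    by_contra hcon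
    push_neg at hcon
    have hV0 : volume (U ∩ {x | 0 < f₂ x}) = 0 := le_antisymm hcon zero_le
    have haef : ∀ᵐ x, x ∈ U → f₂ x = 0 := by
      refine (measure_eq_zero_iff_ae_notMem.mp hV0).mono fun x hx hxU => ?_
      by_contra hne
      exact hx ⟨hxU, lt_of_le_of_ne (hf₂ x) (Ne.symm hne)⟩
    obtain ⟨x₀, hx₀⟩ := hUne
    have hconst : ∀ a b : ℝ, a ≤ b → Set.Ioo a b ⊆ U → F₂ b = F₂ a := by
      intro a b hab hsub
      have hz : ∫ t in Set.Ioc a b, f₂ t = 0 := by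
        refine integral_eq_zero_of_ae ?_
        have h1 : ∀ᵐ t ∂volume.restrict (Set.Ioc a b), t ∈ Set.Ioc a b :=
          ae_restrict_mem measurableSet_Ioc
        have h2 : ∀ᵐ t ∂volume.restrict (Set.Ioc a b), t ∈ U → f₂ t = 0 :=
          ae_restrict_of_ae haef
        have h3 : ∀ᵐ t ∂volume.restrict (Set.Ioc a b), t ≠ b := by
          refine ae_restrict_of_ae ?_
          refine (measure_eq_zero_iff_ae_notMem.mp (Real.volume_singleton (a := b))).mono fun t ht => ?_
          simpa using ht
        filter_upwards [h1, h2, h3] with t ht1 ht2 ht3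
        exact ht2 (hsub ⟨ht1.1, lt_of_le_of_ne ht1.2 ht3⟩)
      have hdiff : F₂ b - F₂ a = ∫ t in Set.Ioc a b, f₂ t := by
        rw [hF₂ b, hF₂ a,
          intervalIntegral.integral_Iic_sub_Iic hi₂.integrableOn hi₂.integrableOn,
          intervalIntegral.integral_of_le hab]
      linarith
    rcases Set.eq_empty_or_nonempty {x | x₀ ≤ x ∧ F₁ x ≤ F₂ x} with hS | hS
    · -- no crossing to the right: F₂ is eventually constant, contradicting F₂ → 1
      have hsub : ∀ b, x₀ ≤ b → Set.Ioo x₀ b ⊆ U := by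
        intro b hb t ht
        by_contra h
        refine Set.eq_empty_iff_forall_notMem.mp hS t ⟨ht.1.le, ?_⟩
        simpa [hUdef, not_lt] using h
      have hconst' : ∀ b, x₀ ≤ b → F₂ b = F₂ x₀ := fun b hb => hconst x₀ b hb (hsub b hb)
      have htend : Filter.Tendsto F₂ Filter.atTop (𝓝 1) := by
        rw [hF2eq]
        have := cdf_tendsto hi₂
        rwa [hint₂] at this
      have hF₂x₀ : F₂ x₀ = 1 := by
        refine tendsto_nhds_unique ?_ htend
        refine Filter.Tendsto.congr' ?_ tendsto_const_nhds
        filter_upwards [Filter.eventually_ge_atTop x₀] with b hb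
        exact (hconst' b hb).symm
      have hF₁x₀ : F₁ x₀ ≤ 1 := by
        rw [hF₁ x₀, ← hint₁]; exact cdf_le hf₁ hi₁ x₀
      have : F₂ x₀ < F₁ x₀ := hx₀
      linarith
    · -- first crossing point b: F₂ constant on [x₀, b], contradiction with monotonicity
      have hSclosed : IsClosed {x | x₀ ≤ x ∧ F₁ x ≤ F₂ x} := by
        have : {x | x₀ ≤ x ∧ F₁ x ≤ F₂ x} = Set.Ici x₀ ∩ {x | F₁ x ≤ F₂ x} := by
          ext x; simp [Set.mem_Ici, Set.mem_setOf_eq]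
        rw [this]
        exact isClosed_Ici.inter (isClosed_le hF₁c hF₂c)
      have hSbdd : BddBelow {x | x₀ ≤ x ∧ F₁ x ≤ F₂ x} := ⟨x₀, fun s hs => hs.1⟩
      have hbS : sInf {x | x₀ ≤ x ∧ F₁ x ≤ F₂ x} ∈ {x | x₀ ≤ x ∧ F₁ x ≤ F₂ x} :=
        hSclosed.csInf_mem hS hSbdd
      set b := sInf {x | x₀ ≤ x ∧ F₁ x ≤ F₂ x} with hbdef
      have hx₀b : x₀ ≤ b := hbS.1
      have hsub2 : Set.Ioo x₀ b ⊆ U := by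
        intro t ht
        by_contra h
        have htS : t ∈ {x | x₀ ≤ x ∧ F₁ x ≤ F₂ x} := by
          refine ⟨ht.1.le, ?_⟩
          simpa [hUdef, not_lt] using h
        exact absurd ht.2 (not_lt.mpr (csInf_le hSbdd htS))
      have hF₂b : F₂ b = F₂ x₀ := hconst x₀ b hx₀b hsub2
      have hmono1 : F₁ x₀ ≤ F₁ b := by
        rw [hF₁ x₀, hF₁ b]
        exact cdf_mono hf₁ hi₁ hx₀b
      have h2 : F₁ b ≤ F₂ b := hbS.2
      have h3 : F₂ x₀ < F₁ x₀ := hx₀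
      linarith
  -- the strict gap
  have hnn : ∀ x, 0 ≤ f₂ x * (Fm x ^ n - F₂ x ^ n) := fun x =>
    mul_nonneg (hf₂ x) (sub_nonneg.mpr (pow_le_pow_left₀ (hF₂0 x) (hF₂Fm x) n))
  have hgap : 0 < ∫ x, f₂ x * (Fm x ^ n - F₂ x ^ n) := by
    have h1 : 0 < ∫ x in U ∩ {x | 0 < f₂ x}, f₂ x * (Fm x ^ n - F₂ x ^ n) := by
      rw [setIntegral_pos_iff_support_of_nonneg_ae
        (ae_restrict_of_ae (Filter.Eventually.of_forall hnn)) hi_c.integrableOn]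
      refine lt_of_lt_of_le hVpos (measure_mono ?_)
      intro x hx
      refine ⟨?_, hx⟩
      have h4 : F₂ x < F₁ x := hx.1
      have h2 : F₂ x < Fm x := by
        simp only [hFmdef]
        nlinarith [h4, hπ0]
      have h3 : F₂ x ^ n < Fm x ^ n := pow_lt_pow_left₀ h2 (hF₂0 x) hn
      exact ne_of_gt (mul_pos hx.2 (sub_pos.mpr h3))
    exact lt_of_lt_of_le h1
      (setIntegral_le_integral hi_c (Filter.Eventually.of_forall hnn))
  have hsplit : ∫ x, f₂ x * Fm x ^ n
      = (∫ x, f₂ x * F₂ x ^ n) + ∫ x, f₂ x * (Fm x ^ n - F₂ x ^ n) := by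
    rw [← integral_add hi_b hi_c]
    congr 1
    funext x
    ring
  have hI : 1/(n+1:ℝ) < ∫ x, f₂ x * Fm x ^ n := by
    rw [hsplit]
    linarith
  have hgoal : (∫ x, f₂ x * (π * F₁ x + (1 - π) * F₂ x) ^ n) = ∫ x, f₂ x * Fm x ^ n := rfl
  rw [hgoal]
  have hpos : (0:ℝ) < ((n+1 : ℕ) : ℝ) * (1 - π) := by positivity
  calc 1 - π = ((n+1 : ℕ) : ℝ) * (1 - π) * (1/(n+1:ℝ)) := by
        push_cast
        field_simp
    _ < ((n+1 : ℕ) : ℝ) * (1 - π) * ∫ x, f₂ x * Fm x ^ n :=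
        mul_lt_mul_of_pos_left hI hpos
end
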